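/- For each ρ > 0 the measure ν_ρ is invariant for the infinite silo model: if η has law ν_ρ, the random variables (U(i) : i ∈ ℤ) are i.i.d. uniform on [0,1] and independent of η, and η₁ is defined by η₁(i) = η(i−1)U(i−1) + η(i+1)(1 − U(i+1)) for all i ∈ ℤ, then η₁ also has law ν_ρ. -/

import Mathlib

open MeasureTheory ProbabilityTheory Filter

noncomputable section

/-- The uniform distribution on `[0,1]`. -/
def unif01 : Measure ℝ := volume.restrict (Set.Icc (0:ℝ) 1)

/-- Truncation of a configuration to the box `Λ^N = {1,…,N}` (zero outside). -/
def trunc (N : ℕ) (w : ℤ → ℝ) : ℤ → ℝ :=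
  fun i => if 1 ≤ i ∧ i ≤ (N : ℤ) then w i else 0

/-- One step of the width-`N` silo dynamics with fractions `u` and added weights `v`. -/
def siloStep (N : ℕ) (u v w : ℤ → ℝ) : ℤ → ℝ :=
  trunc N fun i => v i + trunc N w (i + 1) * u (i + 1) + trunc N w (i - 1) * (1 - u (i - 1))

/-- `ν` is the product measure on `ℤ → ℝ` with all marginals `m`
(characterized through its finite-dimensional distributions). -/
def IsProductLaw (m : Measure ℝ) (ν : Measure (ℤ → ℝ)) : Prop :=
  IsProbabilityMeasure ν ∧
    ∀ I : Finset ℤ, ν.map (fun w (i : I) => w (i : ℤ)) = Measure.pi fun _ : I => m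

/-- The law on `ℤ → ℝ` which is iid `m` on the finite window `I` and `0` elsewhere. -/
def finExtLaw (I : Finset ℤ) (m : Measure ℝ) : Measure (ℤ → ℝ) :=
  (Measure.pi fun _ : I => m).map fun f i => if h : i ∈ I then f ⟨i, h⟩ else 0

/-- Law of the pair (fractions, weights) driving one step of the width-`N` silo. -/
def siloDriveLaw (N : ℕ) (νV : Measure ℝ) : Measure ((ℤ → ℝ) × (ℤ → ℝ)) :=
  (finExtLaw (Finset.Icc 0 ((N : ℤ) + 1)) unif01).prod (finExtLaw (Finset.Icc 1 (N : ℤ)) νV)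

/-- `μ` is carried by the state space `[0,∞)^{Λ^N}`. -/
def SiloSupported (N : ℕ) (μ : Measure (ℤ → ℝ)) : Prop :=
  μ {w | ∀ i : ℤ, 0 ≤ w i ∧ (¬(1 ≤ i ∧ i ≤ (N : ℤ)) → w i = 0)} = 1

/-- Hypotheses on the common law of the grain weights `V_t(i)`: a probability measure on
`[0,∞)` with mean `1` and finite variance. -/
def IsVLaw (νV : Measure ℝ) : Prop :=
  IsProbabilityMeasure νV ∧ νV {x | x < 0} = 0 ∧ (∫ x, x ∂νV) = 1 ∧
    Integrable (fun x => x ^ 2) νV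

/-- `μ` is an invariant probability measure for the width-`N` silo process. -/
def IsSiloInvariant (N : ℕ) (νV : Measure ℝ) (μ : Measure (ℤ → ℝ)) : Prop :=
  IsProbabilityMeasure μ ∧ SiloSupported N μ ∧
    (μ.prod (siloDriveLaw N νV)).map (fun p => siloStep N p.2.1 p.2.2 p.1) = μ

/-- The law of the silo process at time `t`, started from the distribution `μ0`. -/
def siloChainLaw (N : ℕ) (νV : Measure ℝ) (μ0 : Measure (ℤ → ℝ)) : ℕ → Measure (ℤ → ℝ)
  | 0 => μ0
  | t + 1 =>
      ((siloChainLaw N νV μ0 t).prod (siloDriveLaw N νV)).map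
        fun p => siloStep N p.2.1 p.2.2 p.1

/-- One step of the infinite silo model with fractions `u`. -/
def ismStep (u η : ℤ → ℝ) : ℤ → ℝ :=
  fun i => η (i - 1) * u (i - 1) + η (i + 1) * (1 - u (i + 1))

/-- `ν` is invariant for the infinite silo model. -/
def IsISMInvariant (ν : Measure (ℤ → ℝ)) : Prop :=
  ∀ κ : Measure (ℤ → ℝ), IsProductLaw unif01 κ →
    ((ν.prod κ).map fun p => ismStep p.2 p.1) = ν

/-- The shift `τ_1` on configurations. -/
def shift1 (η : ℤ → ℝ) : ℤ → ℝ := fun i => η (i - 1)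

/-- `ν` plays the role of `ν_ρ`: the product of Gamma(2, 2/ρ) laws for `ρ ≠ 0`,
and the point mass at the zero configuration for `ρ = 0`. -/
def IsNuRho (ρ : ℝ) (ν : Measure (ℤ → ℝ)) : Prop :=
  (ρ = 0 → ν = Measure.dirac fun _ => 0) ∧
    (ρ ≠ 0 → IsProductLaw (gammaMeasure 2 (2 / ρ)) ν)


set_option maxHeartbeats 1000000

open Real Set
open scoped ENNReal NNReal

lemma unif01_prob : IsProbabilityMeasure unif01 :=
  ⟨by simp [unif01, Real.volume_Icc]⟩

lemma measurable_gammaPDF (a r : ℝ) : Measurable (gammaPDF a r) :=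
  (measurable_gammaPDFReal a r).ennreal_ofReal

lemma gammaPDF_ne_top (a r x : ℝ) : gammaPDF a r x ≠ ⊤ := ENNReal.ofReal_ne_top

lemma gammaPDF_one' (r y : ℝ) :
    gammaPDF 1 r y = ENNReal.ofReal (if 0 ≤ y then r * Real.exp (-(r*y)) else 0) := by
  rw [gammaPDF_eq]
  congr 1
  split_ifs with h
  · norm_num [Real.Gamma_one, Real.rpow_one, show (1:ℝ)-1 = 0 by ring, Real.rpow_zero]
  · rfl

lemma gammaPDF_two' (r y : ℝ) :
    gammaPDF 2 r y = ENNReal.ofReal (if 0 ≤ y then r^2 * y * Real.exp (-(r*y)) else 0) := by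
  rw [gammaPDF_eq]
  congr 1
  split_ifs with h
  · rw [Real.Gamma_two, show (2:ℝ)-1 = 1 by ring, Real.rpow_one,
      show (2:ℝ) = ((2:ℕ):ℝ) by norm_num, Real.rpow_natCast]
    ring
  · rfl

lemma conv_pointwise {r : ℝ} (hr : 0 < r) (x : ℝ) :
    ∫⁻ a, gammaPDF 1 r a * gammaPDF 1 r (x - a) = gammaPDF 2 r x := by
  have hfun : (fun a => gammaPDF 1 r a * gammaPDF 1 r (x - a))
      = (Set.Icc (0:ℝ) x).indicator (fun _ => ENNReal.ofReal (r^2 * Real.exp (-(r*x)))) := by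
    funext a
    rw [gammaPDF_one', gammaPDF_one', Set.indicator]
    by_cases h0 : 0 ≤ a
    · by_cases h1 : a ≤ x
      · rw [if_pos h0, if_pos (by simpa [sub_nonneg] using h1), if_pos (Set.mem_Icc.2 ⟨h0, h1⟩),
          ← ENNReal.ofReal_mul (by positivity)]
        congr 1
        rw [mul_mul_mul_comm, ← Real.exp_add, show -(r*a) + -(r*(x-a)) = -(r*x) by ring]
        ring
      · rw [if_pos h0, if_neg (by simpa [sub_nonneg] using h1),
          if_neg (fun hc : a ∈ Icc 0 x => h1 hc.2)]
        simp
    · rw [if_neg h0, if_neg (fun hc : a ∈ Icc 0 x => h0 hc.1)]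
      simp
  rw [hfun, lintegral_indicator measurableSet_Icc, setLIntegral_const, Real.volume_Icc,
    gammaPDF_two']
  by_cases hx : 0 ≤ x
  · rw [if_pos hx, ← ENNReal.ofReal_mul (by positivity)]
    congr 1
    ring
  · rw [if_neg hx, show ENNReal.ofReal (x-0) = 0 from ENNReal.ofReal_of_nonpos (by linarith)]
    simp

lemma conv_gamma {r : ℝ} (hr : 0 < r) :
    ((gammaMeasure 1 r).prod (gammaMeasure 1 r)).map (fun p : ℝ × ℝ => p.1 + p.2)
      = gammaMeasure 2 r := by
  have hconv : ∀ x:ℝ, ∫⁻ a, gammaPDF 1 r a * gammaPDF 1 r (x - a) = gammaPDF 2 r x :=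
    conv_pointwise hr
  have hm1 : Measurable (gammaPDF 1 r) := measurable_gammaPDF 1 r
  haveI : IsProbabilityMeasure (gammaMeasure 1 r) :=
    isProbabilityMeasure_gammaMeasure (by norm_num : (0:ℝ) < 1) hr
  have hadd : Measurable (fun p : ℝ × ℝ => p.1 + p.2) := measurable_fst.add measurable_snd

  ext s hs
  have hχ : Measurable (s.indicator (fun _ => (1:ℝ≥0∞))) := (measurable_indicator_const_iff 1).2 hs
  rw [Measure.map_apply hadd hs, Measure.prod_apply (hs.preimage hadd)]
  rw [show gammaMeasure 2 r = volume.withDensity (gammaPDF 2 r) from rfl,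
    withDensity_apply _ hs]
  have hinner : ∀ a : ℝ, (gammaMeasure 1 r) (Prod.mk a ⁻¹' ((fun p : ℝ×ℝ => p.1+p.2) ⁻¹' s))
      = ∫⁻ x, s.indicator (fun _ => (1:ℝ≥0∞)) x * gammaPDF 1 r (x - a) := by
    intro a
    have hpre : (Prod.mk a ⁻¹' ((fun p : ℝ×ℝ => p.1+p.2) ⁻¹' s)) = (a + ·) ⁻¹' s := rfl
    rw [hpre, show gammaMeasure 1 r = volume.withDensity (gammaPDF 1 r) from rfl,
      withDensity_apply _ (hs.preimage (measurable_const_add a))]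
    have hemb : MeasurableEmbedding (a + ·) := (MeasurableEquiv.addLeft a).measurableEmbedding
    have key := MeasurePreserving.setLIntegral_comp_preimage_emb
      (measurePreserving_add_left volume a) hemb (fun x => gammaPDF 1 r (x - a)) s
    simp only [add_sub_cancel_left] at key
    rw [key, ← lintegral_indicator hs]
    congr 1
    funext x
    rw [Set.indicator, Set.indicator]
    split_ifs <;> simp
  simp_rw [hinner]
  rw [show gammaMeasure 1 r = volume.withDensity (gammaPDF 1 r) from rfl]
  rw [lintegral_withDensity_eq_lintegral_mul _ hm1 (by
    exact Measurable.lintegral_prod_right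
      (f := fun a x => s.indicator (fun _ => (1:ℝ≥0∞)) x * gammaPDF 1 r (x - a))
      ((hχ.comp measurable_snd).mul (hm1.comp (measurable_snd.sub measurable_fst))))]
  simp only [Pi.mul_apply]
  have hpull : ∀ a : ℝ, gammaPDF 1 r a * (∫⁻ x, s.indicator (fun _ => (1:ℝ≥0∞)) x * gammaPDF 1 r (x - a))
      = ∫⁻ x, gammaPDF 1 r a * (s.indicator (fun _ => (1:ℝ≥0∞)) x * gammaPDF 1 r (x - a)) :=
    fun a => (lintegral_const_mul' _ _ (gammaPDF_ne_top 1 r a)).symm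
  simp_rw [hpull]
  rw [lintegral_lintegral_swap (by
    exact ((hm1.comp measurable_fst).mul
      ((hχ.comp measurable_snd).mul (hm1.comp (measurable_snd.sub measurable_fst)))).aemeasurable)]
  have hptwise : ∀ x : ℝ, (∫⁻ a, gammaPDF 1 r a * (s.indicator (fun _ => (1:ℝ≥0∞)) x * gammaPDF 1 r (x - a)))
      = s.indicator (fun _ => (1:ℝ≥0∞)) x * gammaPDF 2 r x := by
    intro x
    simp_rw [mul_left_comm (gammaPDF 1 r _)]
    rw [lintegral_const_mul _
      (show Measurable fun a : ℝ => gammaPDF 1 r a * gammaPDF 1 r (x - a) by fun_prop), hconv x]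
  simp_rw [hptwise]
  rw [← lintegral_indicator hs]
  congr 1
  funext x
  rw [Set.indicator, Set.indicator]
  split_ifs <;> simp

lemma split_gamma {r : ℝ} (hr : 0 < r) :
    ((gammaMeasure 2 r).prod unif01).map (fun p : ℝ × ℝ => (p.1 * p.2, p.1 * (1 - p.2)))
      = (gammaMeasure 1 r).prod (gammaMeasure 1 r) := by
  haveI : IsProbabilityMeasure unif01 := unif01_prob
  haveI : IsProbabilityMeasure (gammaMeasure 1 r) := isProbabilityMeasure_gammaMeasure (by norm_num : (0:ℝ) < 1) hr
  have hm1 : Measurable (gammaPDF 1 r) := measurable_gammaPDF 1 r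
  have hm2 : Measurable (gammaPDF 2 r) := measurable_gammaPDF 2 r
  have hψ : Measurable (fun p : ℝ × ℝ => (p.1 * p.2, p.1 * (1 - p.2))) := by fun_prop
  ext s hs
  -- the auxiliary set
  set W : Set (ℝ × ℝ) := {p : ℝ × ℝ | (p.2, p.1 - p.2) ∈ s ∧ p.2 ∈ Icc 0 p.1} with hW
  have hWm : MeasurableSet W := by
    apply MeasurableSet.inter
    · exact hs.preimage (by fun_prop)
    · exact measurableSet_le measurable_const measurable_snd |>.inter
        (measurableSet_le measurable_snd measurable_fst)
  set Φ : ℝ → ℝ → ℝ≥0∞ := fun x a =>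
    ENNReal.ofReal (r^2 * Real.exp (-(r*x))) * W.indicator (fun _ => (1:ℝ≥0∞)) (x, a) with hΦ
  have hΦm : Measurable (fun q : ℝ × ℝ => Φ q.1 q.2) := by
    apply Measurable.mul
    · fun_prop
    · exact ((measurable_indicator_const_iff 1).2 hWm).comp (measurable_fst.prodMk measurable_snd)
  rw [Measure.map_apply hψ hs, Measure.prod_apply (hs.preimage hψ)]
  rw [show gammaMeasure 2 r = volume.withDensity (gammaPDF 2 r) from rfl]
  rw [lintegral_withDensity_eq_lintegral_mul _ hm2
    (measurable_measure_prodMk_left (hs.preimage hψ))]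
  simp only [Pi.mul_apply]
  -- pointwise identity in x
  have hkey : ∀ x : ℝ,
      gammaPDF 2 r x * unif01 (Prod.mk x ⁻¹' ((fun p : ℝ × ℝ => (p.1 * p.2, p.1 * (1 - p.2))) ⁻¹' s))
        = ∫⁻ a, Φ x a := by
    intro x
    have hTm : MeasurableSet {a : ℝ | (a, x - a) ∈ s} := hs.preimage (by fun_prop)
    have hslice : ∀ a : ℝ, W.indicator (fun _ => (1:ℝ≥0∞)) (x, a)
        = ({a : ℝ | (a, x - a) ∈ s} ∩ Icc 0 x).indicator (fun _ => (1:ℝ≥0∞)) a := by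
      intro a
      rw [Set.indicator, Set.indicator]
      congr 1
    have hint : ∫⁻ a, Φ x a
        = ENNReal.ofReal (r^2 * Real.exp (-(r*x))) * volume ({a : ℝ | (a, x - a) ∈ s} ∩ Icc 0 x) := by
      simp_rw [hΦ, hslice]
      rw [lintegral_const_mul' _ _ ENNReal.ofReal_ne_top]
      congr 1
      rw [← lintegral_indicator_one (hTm.inter measurableSet_Icc)]
      rfl
    rw [hint]
    rcases le_or_gt x 0 with hx | hx
    · -- both sides vanish
      have h2 : gammaPDF 2 r x = 0 := by
        rw [gammaPDF_two']
        split_ifs with h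
        · rw [show x = 0 from le_antisymm hx h]; simp
        · simp
      have hv : volume ({a : ℝ | (a, x - a) ∈ s} ∩ Icc 0 x) = 0 := by
        refine measure_mono_null (fun a ha => ?_) (volume_singleton (a := (0:ℝ)))
        have h0a : 0 ≤ a := ha.2.1
        have hax : a ≤ x := ha.2.2
        have : a = 0 := le_antisymm (hax.trans hx) h0a
        simp [this]
      rw [h2, hv, zero_mul, mul_zero]
    · -- main case x > 0
      have hxne : x ≠ 0 := ne_of_gt hx
      have hpre : Prod.mk x ⁻¹' ((fun p : ℝ × ℝ => (p.1 * p.2, p.1 * (1 - p.2))) ⁻¹' s) ∩ Icc 0 1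
          = (fun u : ℝ => x * u) ⁻¹' ({a : ℝ | (a, x - a) ∈ s} ∩ Icc 0 x) := by
        ext u
        simp only [Set.mem_inter_iff, Set.mem_preimage, Set.mem_setOf_eq, Set.mem_Icc]
        constructor
        · rintro ⟨h1, h2, h3⟩
          refine ⟨by rwa [show x - x * u = x * (1 - u) by ring],
            mul_nonneg hx.le h2, (mul_le_iff_le_one_right hx).2 h3⟩
        · rintro ⟨h1, h2, h3⟩
          refine ⟨by rwa [show x * (1 - u) = x - x * u by ring],
            (mul_nonneg_iff_of_pos_left hx).1 h2, (mul_le_iff_le_one_right hx).1 h3⟩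
      rw [unif01, Measure.restrict_apply ((hs.preimage hψ).preimage (measurable_prodMk_left)), hpre]
      rw [show (fun u : ℝ => x * u) ⁻¹' ({a : ℝ | (a, x - a) ∈ s} ∩ Icc 0 x)
          = (x * ·) ⁻¹' ({a : ℝ | (a, x - a) ∈ s} ∩ Icc 0 x) from rfl]
      rw [← Measure.map_apply (measurable_const_mul x) (hTm.inter measurableSet_Icc),
        Real.map_volume_mul_left hxne]
      rw [Measure.smul_apply, smul_eq_mul, gammaPDF_two', if_pos hx.le, ← mul_assoc,
        ← ENNReal.ofReal_mul (by positivity)]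
      congr 2
      rw [abs_of_pos (inv_pos.2 hx)]
      field_simp
  simp_rw [hkey]
  rw [lintegral_lintegral_swap hΦm.aemeasurable]
  have hsub : ∀ a : ℝ, (∫⁻ x, Φ x a)
      = gammaPDF 1 r a * ∫⁻ b, gammaPDF 1 r b * s.indicator (fun _ => (1:ℝ≥0∞)) (a, b) := by
    intro a
    have hmint : Measurable (fun x => Φ x a) := by fun_prop
    rw [← (measurePreserving_add_left volume a).lintegral_comp (f := fun x => Φ x a) hmint]
    have hptw : ∀ b : ℝ, Φ (a + b) a
        = gammaPDF 1 r a * (gammaPDF 1 r b * s.indicator (fun _ => (1:ℝ≥0∞)) (a, b)) := by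
      intro b
      have hmem : ((a + b, a) ∈ W) ↔ ((a, b) ∈ s ∧ 0 ≤ a ∧ 0 ≤ b) := by
        simp only [hW, Set.mem_setOf_eq, Set.mem_Icc, add_sub_cancel_left,
          le_add_iff_nonneg_right]
      rw [hΦ]
      simp only [gammaPDF_one', Set.indicator]
      by_cases h3 : (a,b) ∈ s <;> by_cases h1 : 0 ≤ a <;> by_cases h2 : 0 ≤ b
      · rw [if_pos (hmem.mpr ⟨h3, h1, h2⟩), if_pos h1, if_pos h2, if_pos h3, mul_one, mul_one,
          ← ENNReal.ofReal_mul (by positivity)]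
        congr 1
        rw [mul_mul_mul_comm, ← Real.exp_add, show -(r*a) + -(r*b) = -(r*(a+b)) by ring]
        ring
      all_goals {
        have hcon : ¬ ((a + b, a) ∈ W) := fun hc => by
          rcases hmem.mp hc with ⟨x1, x2, x3⟩; tauto
        rw [if_neg hcon]
        simp [h1, h2, h3] }
    simp_rw [hptw]
    rw [lintegral_const_mul' _ _ (gammaPDF_ne_top 1 r a)]
  simp_rw [hsub]
  rw [Measure.prod_apply hs]
  rw [show gammaMeasure 1 r = volume.withDensity (gammaPDF 1 r) from rfl]
  rw [lintegral_withDensity_eq_lintegral_mul _ hm1 (measurable_measure_prodMk_left hs)]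
  congr 1
  funext a
  simp only [Pi.mul_apply]
  congr 1
  rw [withDensity_apply _ (measurable_prodMk_left hs),
    ← lintegral_indicator (measurable_prodMk_left hs)]
  congr 1
  funext b
  rw [Set.indicator, Set.indicator]
  by_cases hb : (a, b) ∈ s
  · rw [if_pos hb, if_pos (show b ∈ Prod.mk a ⁻¹' s from hb), mul_one]
  · rw [if_neg hb, if_neg (show b ∉ Prod.mk a ⁻¹' s from hb), mul_zero]

lemma pi_map_coord {ι : Type*} [Fintype ι] {α β : Type*} [MeasurableSpace α] [MeasurableSpace β]
    (μ : ι → Measure α) [∀ i, IsProbabilityMeasure (μ i)] (g : ι → α → β)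
    (hg : ∀ i, Measurable (g i)) :
    (Measure.pi μ).map (fun f i => g i (f i)) = Measure.pi (fun i => (μ i).map (g i)) := by
  haveI : ∀ i, IsProbabilityMeasure ((μ i).map (g i)) :=
    fun i => Measure.isProbabilityMeasure_map (hg i).aemeasurable
  refine (Measure.pi_eq fun s hs => ?_).symm
  have hmeas : Measurable (fun (f : ι → α) (i : ι) => g i (f i)) :=
    measurable_pi_lambda (fun (f : ι → α) (i : ι) => g i (f i))
      fun i => by exact (hg i).comp (measurable_pi_apply i)
  have hpre : (fun (f : ι → α) (i : ι) => g i (f i)) ⁻¹' (Set.pi Set.univ s)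
      = Set.pi Set.univ (fun i => g i ⁻¹' s i) := by
    ext f; simp [Set.mem_pi]
  rw [Measure.map_apply hmeas (MeasurableSet.univ_pi hs), hpre, Measure.pi_pi]
  exact Finset.prod_congr rfl fun i _ => (Measure.map_apply (hg i) (hs i)).symm

lemma pi_map_reindex {ι ι' : Type*} [Fintype ι] [Fintype ι'] {α : Type*} [MeasurableSpace α]
    (σ : ι → ι') (hσ : Function.Injective σ) (μ : Measure α) [IsProbabilityMeasure μ] :
    (Measure.pi fun _ : ι' => μ).map (fun f (i : ι) => f (σ i)) = Measure.pi fun _ : ι => μ := by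
  classical
  refine (Measure.pi_eq fun s hs => ?_).symm
  rw [Measure.map_apply (f := fun (f : ι' → α) (i : ι) => f (σ i))
    (measurable_pi_lambda _ fun i => measurable_pi_apply (σ i))
    (MeasurableSet.univ_pi hs)]
  have hex : ∀ i : ι, ∃ i', σ i' = σ i := fun i => ⟨i, rfl⟩
  set s' : ι' → Set α := fun j => if h : ∃ i, σ i = j then s h.choose else Set.univ with hs'
  have hval : ∀ i : ι, s' (σ i) = s i := by
    intro i
    rw [hs']
    simp only
    rw [dif_pos (hex i), hσ (hex i).choose_spec]
  have hpre : (fun f (i : ι) => f (σ i)) ⁻¹' (Set.pi Set.univ s) = Set.pi Set.univ s' := by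
    ext f
    simp only [Set.mem_preimage, Set.mem_pi, Set.mem_univ, forall_true_left]
    constructor
    · intro h j
      rw [hs']
      simp only
      by_cases hj : ∃ i, σ i = j
      · rw [dif_pos hj]
        have := h hj.choose
        rwa [hj.choose_spec] at this
      · rw [dif_neg hj]; trivial
    · intro h i
      have := h (σ i)
      rwa [hval i] at this
  rw [hpre, Measure.pi_pi]
  have h1 : ∀ j ∈ Finset.univ, j ∉ Finset.univ.image σ → μ (s' j) = 1 := by
    intro j _ hj
    have hne : ¬ ∃ i, σ i = j := by
      rintro ⟨i, rfl⟩
      exact hj (Finset.mem_image.2 ⟨i, Finset.mem_univ i, rfl⟩)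
    rw [hs']
    simp only
    rw [dif_neg hne]
    exact measure_univ
  rw [← Finset.prod_subset (Finset.subset_univ (Finset.univ.image σ)) h1,
    Finset.prod_image (fun i _ i' _ h => hσ h)]
  exact Finset.prod_congr rfl fun i _ => by rw [hval i]

lemma core_step {r : ℝ} (hr : 0 < r) (I J : Finset ℤ)
    (h1 : ∀ i : ℤ, i ∈ I → i - 1 ∈ J) (h2 : ∀ i : ℤ, i ∈ I → i + 1 ∈ J) :
    ((Measure.pi fun _ : J => gammaMeasure 2 r).prod (Measure.pi fun _ : J => unif01)).map
      (fun p (i : I) => p.1 ⟨(i:ℤ) - 1, h1 i i.2⟩ * p.2 ⟨(i:ℤ) - 1, h1 i i.2⟩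
        + p.1 ⟨(i:ℤ) + 1, h2 i i.2⟩ * (1 - p.2 ⟨(i:ℤ) + 1, h2 i i.2⟩))
      = Measure.pi fun _ : I => gammaMeasure 2 r := by
  haveI : IsProbabilityMeasure (gammaMeasure 2 r) :=
    isProbabilityMeasure_gammaMeasure (by norm_num : (0:ℝ) < 2) hr
  haveI : IsProbabilityMeasure (gammaMeasure 1 r) :=
    isProbabilityMeasure_gammaMeasure (by norm_num : (0:ℝ) < 1) hr
  haveI : IsProbabilityMeasure unif01 := unif01_prob
  set γ1 := gammaMeasure 1 r
  set γ2 := gammaMeasure 2 r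
  set eJ := MeasurableEquiv.arrowProdEquivProdArrow ℝ ℝ ↥J
  set eI := MeasurableEquiv.arrowProdEquivProdArrow ℝ ℝ ↥I
  have mp1 : MeasurePreserving eJ.symm
      ((Measure.pi fun _ : J => γ2).prod (Measure.pi fun _ : J => unif01))
      (Measure.pi fun _ : J => γ2.prod unif01) :=
    MeasurePreserving.symm eJ
      (measurePreserving_arrowProdEquivProdArrow ℝ ℝ ↥J (fun _ => γ2) (fun _ => unif01))
  have mp2 : MeasurePreserving
      (fun f (j : J) => ((f j).1 * (f j).2, (f j).1 * (1 - (f j).2)))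
      (Measure.pi fun _ : J => γ2.prod unif01)
      (Measure.pi fun _ : J => γ1.prod γ1) := by
    refine ⟨by fun_prop, ?_⟩
    rw [pi_map_coord (fun _ : J => γ2.prod unif01)
      (fun _ q => (q.1 * q.2, q.1 * (1 - q.2))) (fun _ => by fun_prop)]
    exact congrArg Measure.pi (funext fun _ => split_gamma hr)
  have mp3 : MeasurePreserving eJ
      (Measure.pi fun _ : J => γ1.prod γ1)
      ((Measure.pi fun _ : J => γ1).prod (Measure.pi fun _ : J => γ1)) :=
    measurePreserving_arrowProdEquivProdArrow ℝ ℝ ↥J (fun _ => γ1) (fun _ => γ1)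
  have hinjA : Function.Injective (fun i : I => (⟨(i:ℤ) - 1, h1 i i.2⟩ : J)) := by
    intro i i' h
    have := congrArg (Subtype.val) h
    simp only at this
    exact Subtype.ext (by omega)
  have hinjB : Function.Injective (fun i : I => (⟨(i:ℤ) + 1, h2 i i.2⟩ : J)) := by
    intro i i' h
    have := congrArg (Subtype.val) h
    simp only at this
    exact Subtype.ext (by omega)
  have mp4 : MeasurePreserving
      (Prod.map (fun (f : J → ℝ) (i : I) => f ⟨(i:ℤ) - 1, h1 i i.2⟩)
                (fun (f : J → ℝ) (i : I) => f ⟨(i:ℤ) + 1, h2 i i.2⟩))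
      ((Measure.pi fun _ : J => γ1).prod (Measure.pi fun _ : J => γ1))
      ((Measure.pi fun _ : I => γ1).prod (Measure.pi fun _ : I => γ1)) :=
    MeasurePreserving.prod
      ⟨measurable_pi_lambda _ fun i => measurable_pi_apply _, pi_map_reindex _ hinjA γ1⟩
      ⟨measurable_pi_lambda _ fun i => measurable_pi_apply _, pi_map_reindex _ hinjB γ1⟩
  have mp5 : MeasurePreserving eI.symm
      ((Measure.pi fun _ : I => γ1).prod (Measure.pi fun _ : I => γ1))
      (Measure.pi fun _ : I => γ1.prod γ1) :=
    MeasurePreserving.symm eI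
      (measurePreserving_arrowProdEquivProdArrow ℝ ℝ ↥I (fun _ => γ1) (fun _ => γ1))
  have mp6 : MeasurePreserving (fun f (i : I) => (f i).1 + (f i).2)
      (Measure.pi fun _ : I => γ1.prod γ1)
      (Measure.pi fun _ : I => γ2) := by
    refine ⟨by fun_prop, ?_⟩
    rw [pi_map_coord (fun _ : I => γ1.prod γ1) (fun _ q => q.1 + q.2) (fun _ => by fun_prop)]
    exact congrArg Measure.pi (funext fun _ => conv_gamma hr)
  have total := mp6.comp (mp5.comp (mp4.comp (mp3.comp (mp2.comp mp1))))
  have hfun : (fun p (i : I) => p.1 ⟨(i:ℤ) - 1, h1 i i.2⟩ * p.2 ⟨(i:ℤ) - 1, h1 i i.2⟩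
        + p.1 ⟨(i:ℤ) + 1, h2 i i.2⟩ * (1 - p.2 ⟨(i:ℤ) + 1, h2 i i.2⟩))
      = ((fun f (i : I) => (f i).1 + (f i).2) ∘ (eI.symm ∘
          (Prod.map (fun (f : J → ℝ) (i : I) => f ⟨(i:ℤ) - 1, h1 i i.2⟩)
                (fun (f : J → ℝ) (i : I) => f ⟨(i:ℤ) + 1, h2 i i.2⟩) ∘
            (eJ ∘ ((fun f (j : J) => ((f j).1 * (f j).2, (f j).1 * (1 - (f j).2))) ∘
              eJ.symm))))) := by
    funext p
    rfl
  rw [hfun]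
  exact total.map_eq

/-- For each `ρ > 0` the product Gamma measure `ν_ρ` is invariant for the infinite silo
model: if `η ~ ν_ρ` and the fractions `U` are iid uniform on `[0,1]` independent of `η`,
then `η₁(i) = η(i-1)U(i-1) + η(i+1)(1-U(i+1))` again has law `ν_ρ`. -/
theorem nuRho_invariant_for_ISM (ρ : ℝ) (hρ : 0 < ρ)
    (ν κ : Measure (ℤ → ℝ))
    (hν : IsProductLaw (gammaMeasure 2 (2 / ρ)) ν) (hκ : IsProductLaw unif01 κ) :
    ((ν.prod κ).map fun p => ismStep p.2 p.1) = ν := by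
  have hr : 0 < 2 / ρ := by positivity
  haveI : IsProbabilityMeasure (gammaMeasure 2 (2 / ρ)) :=
    isProbabilityMeasure_gammaMeasure (by norm_num : (0:ℝ) < 2) hr
  haveI hνp : IsProbabilityMeasure ν := hν.1
  haveI hκp : IsProbabilityMeasure κ := hκ.1
  have hF : Measurable (fun p : (ℤ → ℝ) × (ℤ → ℝ) => ismStep p.2 p.1) := by
    apply measurable_pi_lambda
    intro i
    show Measurable fun p : (ℤ → ℝ) × (ℤ → ℝ) =>
      p.1 (i - 1) * p.2 (i - 1) + p.1 (i + 1) * (1 - p.2 (i + 1))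
    fun_prop
  have hlim : IsProjectiveLimit ν
      (fun I : Finset ℤ => Measure.pi fun _ : I => gammaMeasure 2 (2 / ρ)) :=
    fun I => hν.2 I
  refine IsProjectiveLimit.unique (fun I => ?_) hlim
  have hres : ∀ (L : Finset ℤ), Measurable ((L.restrict : (ℤ → ℝ) → _)) :=
    fun L => measurable_pi_lambda _ fun i => measurable_pi_apply _
  set J := I.image (fun i => i - 1) ∪ I.image (fun i => i + 1) with hJ
  have h1 : ∀ i : ℤ, i ∈ I → i - 1 ∈ J :=
    fun i hi => Finset.mem_union_left _ (Finset.mem_image_of_mem _ hi)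
  have h2 : ∀ i : ℤ, i ∈ I → i + 1 ∈ J :=
    fun i hi => Finset.mem_union_right _ (Finset.mem_image_of_mem _ hi)
  have hGm : Measurable (fun (p : (↥J → ℝ) × (↥J → ℝ)) (i : ↥I) =>
      p.1 ⟨(i:ℤ) - 1, h1 i i.2⟩ * p.2 ⟨(i:ℤ) - 1, h1 i i.2⟩
        + p.1 ⟨(i:ℤ) + 1, h2 i i.2⟩ * (1 - p.2 ⟨(i:ℤ) + 1, h2 i i.2⟩)) := by
    apply measurable_pi_lambda
    intro i
    fun_prop
  haveI : IsProbabilityMeasure (ν.map ((J.restrict : (ℤ → ℝ) → _))) :=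
    Measure.isProbabilityMeasure_map (hres J).aemeasurable
  haveI : IsProbabilityMeasure (κ.map ((J.restrict : (ℤ → ℝ) → _))) :=
    Measure.isProbabilityMeasure_map (hres J).aemeasurable
  have hprod : (ν.prod κ).map
      (Prod.map ((J.restrict : (ℤ → ℝ) → _)) ((J.restrict : (ℤ → ℝ) → _)))
      = (Measure.pi fun _ : J => gammaMeasure 2 (2 / ρ)).prod
          (Measure.pi fun _ : J => unif01) := by
    rw [← Measure.map_prod_map _ _ (hres J) (hres J)]
    have e1 : ν.map ((J.restrict : (ℤ → ℝ) → _))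
        = Measure.pi fun _ : J => gammaMeasure 2 (2 / ρ) := hν.2 J
    have e2 : κ.map ((J.restrict : (ℤ → ℝ) → _))
        = Measure.pi fun _ : J => unif01 := hκ.2 J
    rw [e1, e2]
  calc (((ν.prod κ).map fun p => ismStep p.2 p.1)).map I.restrict
      = (ν.prod κ).map ((I.restrict : (ℤ → ℝ) → _) ∘ fun p => ismStep p.2 p.1) :=
        Measure.map_map (hres I) hF
    _ = ((ν.prod κ).map
          (Prod.map ((J.restrict : (ℤ → ℝ) → _)) ((J.restrict : (ℤ → ℝ) → _)))).map
          (fun (p : (↥J → ℝ) × (↥J → ℝ)) (i : ↥I) =>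
            p.1 ⟨(i:ℤ) - 1, h1 i i.2⟩ * p.2 ⟨(i:ℤ) - 1, h1 i i.2⟩
              + p.1 ⟨(i:ℤ) + 1, h2 i i.2⟩ * (1 - p.2 ⟨(i:ℤ) + 1, h2 i i.2⟩)) := by
        rw [Measure.map_map hGm ((hres J).prodMap (hres J))]
        rfl
    _ = ((Measure.pi fun _ : J => gammaMeasure 2 (2 / ρ)).prod
          (Measure.pi fun _ : J => unif01)).map
          (fun (p : (↥J → ℝ) × (↥J → ℝ)) (i : ↥I) =>
            p.1 ⟨(i:ℤ) - 1, h1 i i.2⟩ * p.2 ⟨(i:ℤ) - 1, h1 i i.2⟩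
              + p.1 ⟨(i:ℤ) + 1, h2 i i.2⟩ * (1 - p.2 ⟨(i:ℤ) + 1, h2 i i.2⟩)) := by
        rw [hprod]
    _ = Measure.pi fun _ : I => gammaMeasure 2 (2 / ρ) := core_step hr I J h1 h2
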